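/- Let the CII estimate be Î_K = Σ_{ℓ=0}^{n−k} C(n−k,ℓ)·λ_{k,ℓ}·Σ_{W⊆K} (−1)^{k−|W|}·Î_{K,ℓ}^W, where for every W ⊆ K and ℓ ∈ L^{|W|} the stratum estimate Î_{K,ℓ}^W follows the stratum sampling model with count M_{W,ℓ} = 1 + Y_{W,ℓ}, Y_{W,ℓ} binomially distributed with parameters B̃ ≥ 1 and p_{W,ℓ} ≥ 1/γ_k, the sample sequences of distinct estimated strata being mutually independent and independent of the vector of all counts, and Î_{K,ℓ}^W = I_{K,ℓ}^W for ℓ ∉ L^{|W|}. Then the mean squared error satisfies E[(Î_K − I_K)²] ≤ (γ_k/B̃)·Σ_{W⊆K} Σ_{ℓ∈L^{|W|}} C(n−k,ℓ)²·λ_{k,ℓ}²·σ²_{K,ℓ,W}. -/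

import Mathlib

open MeasureTheory ProbabilityTheory Finset
open scoped ENNReal

/-- Finsets carry the discrete σ-algebra. -/
instance finsetMeasurableSpace (n : ℕ) : MeasurableSpace (Finset (Fin n)) := ⊤

/-- The stratum `{S ⊆ N∖K : |S| = ℓ}`. -/
def strata (n : ℕ) (K : Finset (Fin n)) (ℓ : ℕ) : Finset (Finset (Fin n)) :=
  Kᶜ.powerset.filter (fun S => S.card = ℓ)

/-- The stratum value `I_{K,ℓ}^W = (1/C(n−k,ℓ))·Σ_{S ⊆ N∖K, |S|=ℓ} ν(S ∪ W)`. -/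
noncomputable def stratVal (n : ℕ) (ν : Finset (Fin n) → ℝ)
    (K W : Finset (Fin n)) (ℓ : ℕ) : ℝ :=
  (((n - K.card).choose ℓ : ℝ))⁻¹ * ∑ S ∈ strata n K ℓ, ν (S ∪ W)

/-- The stratum variance `σ²_{K,ℓ,W}`: the variance of `ν(S ∪ W)` for `S` uniformly
distributed on `{S ⊆ N∖K : |S| = ℓ}`. -/
noncomputable def stratVar (n : ℕ) (ν : Finset (Fin n) → ℝ)
    (K W : Finset (Fin n)) (ℓ : ℕ) : ℝ :=
  (((n - K.card).choose ℓ : ℝ))⁻¹ *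
    ∑ S ∈ strata n K ℓ, (ν (S ∪ W) - stratVal n ν K W ℓ) ^ 2

/-- The cardinal interaction index `I_K`. -/
noncomputable def CII (n : ℕ) (ν : Finset (Fin n) → ℝ) (lam : ℕ → ℝ)
    (K : Finset (Fin n)) : ℝ :=
  ∑ S ∈ Kᶜ.powerset, lam S.card *
    ∑ W ∈ K.powerset, (-1 : ℝ) ^ (K.card - W.card) * ν (S ∪ W)

/-- The constants `γ_2 = 2(n−1)²` and `γ_k = n^{k−1}·(n−k+1)²` for `k ≥ 3`. -/
noncomputable def gam (n k : ℕ) : ℝ :=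
  if k = 2 then 2 * ((n : ℝ) - 1) ^ 2
  else (n : ℝ) ^ (k - 1) * ((n : ℝ) - k + 1) ^ 2

/-- The stratum estimate: sample mean for estimated strata, exact value otherwise. -/
noncomputable def IhatStrat {Ω : Type*} (n : ℕ) (ν : Finset (Fin n) → ℝ)
    (K : Finset (Fin n)) (L : ℕ → Finset ℕ)
    (S : Finset (Fin n) → ℕ → ℕ → Ω → Finset (Fin n))
    (M : Finset (Fin n) → ℕ → Ω → ℕ) (W : Finset (Fin n)) (ℓ : ℕ) (ω : Ω) : ℝ :=
  if ℓ ∈ L W.card then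
    ((M W ℓ ω : ℝ))⁻¹ * ∑ m ∈ Finset.range (M W ℓ ω), ν (S W ℓ m ω ∪ W)
  else stratVal n ν K W ℓ

/-- The CII estimate `Î_K`. -/
noncomputable def IhatCII {Ω : Type*} (n : ℕ) (ν : Finset (Fin n) → ℝ)
    (K : Finset (Fin n)) (lam : ℕ → ℝ) (L : ℕ → Finset ℕ)
    (S : Finset (Fin n) → ℕ → ℕ → Ω → Finset (Fin n))
    (M : Finset (Fin n) → ℕ → Ω → ℕ) (ω : Ω) : ℝ :=
  ∑ ℓ ∈ Finset.range (n - K.card + 1), ((n - K.card).choose ℓ : ℝ) * lam ℓ *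
    ∑ W ∈ K.powerset, (-1 : ℝ) ^ (K.card - W.card) * IhatStrat n ν K L S M W ℓ ω

/-- The index set of estimated strata: pairs `(W, ℓ)` with `W ⊆ K` and `ℓ ∈ L^{|W|}`. -/
def EstIdx (n : ℕ) (K : Finset (Fin n)) (L : ℕ → Finset ℕ) : Type :=
  {p : Finset (Fin n) × ℕ // p.1 ⊆ K ∧ p.2 ∈ L p.1.card}

/- ===================== auxiliary lemmas ===================== -/

section AuxLemmas

open MeasureTheory ProbabilityTheory Finset
open scoped ENNReal

instance (n : ℕ) : MeasurableSingletonClass (Finset (Fin n)) := ⟨fun _ => trivial⟩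

lemma measurable_finset_fun {n : ℕ} {γ : Type*} [MeasurableSpace γ]
    (g : Finset (Fin n) → γ) : Measurable g := fun _ _ => trivial

lemma strata_eq (n : ℕ) (K : Finset (Fin n)) (ℓ : ℕ) :
    strata n K ℓ = Finset.powersetCard ℓ Kᶜ := by
  rw [strata, Finset.powersetCard_eq_filter]

lemma compl_card (n : ℕ) (K : Finset (Fin n)) : (Kᶜ : Finset (Fin n)).card = n - K.card := by
  rw [Finset.card_compl, Fintype.card_fin]

lemma strata_card (n : ℕ) (K : Finset (Fin n)) (ℓ : ℕ) :
    (strata n K ℓ).card = (n - K.card).choose ℓ := by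
  rw [strata_eq, Finset.card_powersetCard, compl_card]

lemma sum_ite_succ_eq (B m : ℕ) (g : ℕ → ℝ) :
    ∑ j ∈ Finset.range (B+1), (if m = j + 1 then g j else 0) =
    if 1 ≤ m ∧ m ≤ B + 1 then g (m - 1) else 0 := by
  rcases m with _ | m0
  · simp
  · have : ∀ j, (m0 + 1 = j + 1) = (j = m0) := by
      intro j; simp [eq_comm, Nat.succ_inj]
    simp only [this, Finset.sum_ite_eq' (Finset.range (B+1)) m0 g, Finset.mem_range]
    have h2 : (1 ≤ m0 + 1 ∧ m0 + 1 ≤ B + 1) ↔ m0 < B + 1 := by omega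
    simp only [Nat.add_sub_cancel]
    by_cases h : m0 < B + 1 <;> simp [h, Nat.lt_succ_iff.mp, show (m0 ≤ B) ↔ m0 < B+1 from Nat.lt_succ_iff.symm]

lemma CII_eq (n : ℕ) (ν : Finset (Fin n) → ℝ) (lam : ℕ → ℝ) (K : Finset (Fin n)) :
    CII n ν lam K = ∑ ℓ ∈ Finset.range (n - K.card + 1),
      ((n - K.card).choose ℓ : ℝ) * lam ℓ *
        ∑ W ∈ K.powerset, (-1 : ℝ) ^ (K.card - W.card) * stratVal n ν K W ℓ := by
  rw [CII, Finset.powerset_card_disjiUnion, Finset.sum_disjiUnion _ _ ((Kᶜ).pairwise_disjoint_powersetCard.set_pairwise _), compl_card]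
  refine Finset.sum_congr rfl (fun ℓ hℓ => ?_)
  rw [Finset.mem_range] at hℓ
  have hch : 0 < (n - K.card).choose ℓ := Nat.choose_pos (by omega)
  have : ∀ T ∈ Finset.powersetCard ℓ (Kᶜ : Finset (Fin n)),
      lam T.card * ∑ W ∈ K.powerset, (-1 : ℝ) ^ (K.card - W.card) * ν (T ∪ W)
      = lam ℓ * ∑ W ∈ K.powerset, (-1 : ℝ) ^ (K.card - W.card) * ν (T ∪ W) := by
    intro T hT
    rw [(Finset.mem_powersetCard.mp hT).2]
  rw [Finset.sum_congr rfl this, ← Finset.mul_sum, Finset.sum_comm]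
  have : ∀ W ∈ K.powerset,
      ∑ T ∈ Finset.powersetCard ℓ (Kᶜ : Finset (Fin n)), (-1 : ℝ) ^ (K.card - W.card) * ν (T ∪ W)
      = (-1 : ℝ) ^ (K.card - W.card) * (((n - K.card).choose ℓ : ℝ) * stratVal n ν K W ℓ) := by
    intro W _
    have hne : ((n - K.card).choose ℓ : ℝ) ≠ 0 := by exact_mod_cast hch.ne'
    rw [← Finset.mul_sum, stratVal, ← strata_eq]
    field_simp
  rw [Finset.sum_congr rfl this]
  rw [Finset.mul_sum, Finset.mul_sum]
  exact Finset.sum_congr rfl (fun W _ => by ring)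

variable {Ω : Type*} [MeasureSpace Ω] [IsProbabilityMeasure (ℙ : Measure Ω)]

lemma integrable_of_bounded' {f : Ω → ℝ} (hf : Measurable f) (C : ℝ) (h : ∀ ω, |f ω| ≤ C) :
    Integrable f ℙ :=
  ⟨hf.aestronglyMeasurable, HasFiniteIntegral.of_bounded
    (ae_of_all _ (fun ω => by simpa [Real.norm_eq_abs] using h ω))⟩

lemma integral_comp_finite {α : Type*} [Fintype α] [MeasurableSpace α]
    [MeasurableSingletonClass α] (X : Ω → α) (hX : Measurable X) (g : α → ℝ) :
    ∫ ω, g (X ω) ∂ℙ = ∑ t : α, (ℙ {ω | X ω = t}).toReal * g t := by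
  have hset : ∀ t : α, MeasurableSet {ω | X ω = t} := fun t =>
    hX (measurableSet_singleton t)
  have hrw : ∀ ω, g (X ω) = ∑ t : α, Set.indicator {ω | X ω = t} (fun _ => g t) ω := by
    intro ω
    rw [Finset.sum_eq_single (X ω)]
    · simp [Set.indicator_apply]
    · intro t _ ht; simp [Set.indicator_apply, Ne.symm ht]
    · simp
  simp_rw [hrw]
  rw [integral_finset_sum _ (fun t _ => (integrable_const (g t)).indicator (hset t))]
  refine Finset.sum_congr rfl (fun t _ => ?_)
  rw [integral_indicator_const _ (hset t), smul_eq_mul]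
  rfl

lemma integral_ite_eq_toReal {P : Ω → Prop} [DecidablePred P]
    (hs : MeasurableSet {ω | P ω}) :
    ∫ ω, (if P ω then (1:ℝ) else 0) ∂ℙ = (ℙ {ω | P ω}).toReal := by
  have h : ∀ ω, (if P ω then (1:ℝ) else 0) = Set.indicator {ω | P ω} (fun _ => (1:ℝ)) ω := by
    intro ω
    by_cases hP : P ω <;> simp [hP, Set.indicator_apply, Set.mem_setOf_eq]
  simp_rw [h]
  rw [integral_indicator_const _ hs, smul_eq_mul, mul_one]
  rfl

/-- Mean of the centered sample mean is zero. -/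
lemma sample_mean_integral (X : ℕ → Ω → ℝ) (μ0 C : ℝ)
    (hmeas : ∀ j, Measurable (X j)) (hbdd : ∀ j ω, |X j ω| ≤ C)
    (hmean : ∀ j, ∫ ω, X j ω ∂ℙ = μ0) (m : ℕ) (hm : 1 ≤ m) :
    ∫ ω, ((m:ℝ)⁻¹ * ∑ j ∈ Finset.range m, X j ω - μ0) ∂ℙ = 0 := by
  have hint : ∀ j, Integrable (X j) ℙ := fun j => integrable_of_bounded' (hmeas j) C (hbdd j)
  have h1 : Integrable (fun ω => (m:ℝ)⁻¹ * ∑ j ∈ Finset.range m, X j ω) ℙ :=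
    (integrable_finset_sum _ (fun j _ => hint j)).const_mul _
  rw [integral_sub h1 (integrable_const μ0), integral_const, smul_eq_mul, Measure.real, measure_univ,
    ENNReal.toReal_one, one_mul, integral_const_mul,
    integral_finset_sum _ (fun j _ => hint j)]
  simp_rw [hmean]
  rw [Finset.sum_const, Finset.card_range, nsmul_eq_mul]
  rw [inv_mul_cancel_left₀ (by positivity : ((m:ℝ)) ≠ 0)]
  ring

/-- Variance of the sample mean of `m` pairwise independent identically-behaved variables. -/
lemma sample_mean_sq (X : ℕ → Ω → ℝ) (μ0 σ2 C : ℝ)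
    (hmeas : ∀ j, Measurable (X j)) (hbdd : ∀ j ω, |X j ω| ≤ C)
    (hmean : ∀ j, ∫ ω, X j ω ∂ℙ = μ0)
    (hvar : ∀ j, ∫ ω, (X j ω - μ0)^2 ∂ℙ = σ2)
    (hind : ∀ i j, i ≠ j → IndepFun (X i) (X j) ℙ)
    (m : ℕ) (hm : 1 ≤ m) :
    ∫ ω, ((m:ℝ)⁻¹ * ∑ j ∈ Finset.range m, X j ω - μ0)^2 ∂ℙ = σ2 / m := by
  set Y : ℕ → Ω → ℝ := fun j ω => X j ω - μ0 with hY
  have hmeasY : ∀ j, Measurable (Y j) := fun j => (hmeas j).sub measurable_const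
  have hbddY : ∀ j ω, |Y j ω| ≤ C + |μ0| := fun j ω =>
    (abs_sub _ _).trans (add_le_add (hbdd j ω) le_rfl)
  have hintY : ∀ j, Integrable (Y j) ℙ := fun j =>
    integrable_of_bounded' (hmeasY j) _ (hbddY j)
  have hmeanY : ∀ j, ∫ ω, Y j ω ∂ℙ = 0 := by
    intro j
    rw [hY]
    simp only
    rw [integral_sub (integrable_of_bounded' (hmeas j) C (hbdd j)) (integrable_const μ0),
      hmean, integral_const, smul_eq_mul, Measure.real, measure_univ, ENNReal.toReal_one, one_mul, sub_self]
  have hrw : ∀ ω, ((m:ℝ)⁻¹ * ∑ j ∈ Finset.range m, X j ω - μ0)^2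
      = (m:ℝ)⁻¹^2 * ∑ i ∈ Finset.range m, ∑ j ∈ Finset.range m, Y i ω * Y j ω := by
    intro ω
    have h1 : (m:ℝ)⁻¹ * ∑ j ∈ Finset.range m, X j ω - μ0
        = (m:ℝ)⁻¹ * ∑ j ∈ Finset.range m, Y j ω := by
      rw [hY]
      simp only
      rw [Finset.sum_sub_distrib, Finset.sum_const, Finset.card_range, nsmul_eq_mul, mul_sub,
        inv_mul_cancel_left₀ (by positivity : ((m:ℝ)) ≠ 0)]
    rw [h1, mul_pow, sq, sq, Finset.sum_mul_sum]
  simp_rw [hrw]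
  have hintYY : ∀ (i j : ℕ), Integrable (fun ω => Y i ω * Y j ω) ℙ := by
    intro i j
    refine integrable_of_bounded' ((hmeasY i).mul (hmeasY j)) ((C + |μ0|) * (C + |μ0|)) ?_
    intro ω
    rw [abs_mul]
    exact mul_le_mul (hbddY i ω) (hbddY j ω) (abs_nonneg _) ((abs_nonneg _).trans (hbddY i ω))
  rw [integral_const_mul, integral_finset_sum _ (fun i _ =>
    integrable_finset_sum _ (fun j _ => hintYY i j))]
  have hsum : ∀ i ∈ Finset.range m,
      ∫ ω, ∑ j ∈ Finset.range m, Y i ω * Y j ω ∂ℙ = σ2 := by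
    intro i hi
    rw [integral_finset_sum _ (fun j _ => hintYY i j)]
    rw [Finset.sum_eq_single i]
    · have : ∀ ω, Y i ω * Y i ω = (X i ω - μ0)^2 := fun ω => by rw [hY]; ring
      simp_rw [this]; exact hvar i
    · intro j _ hji
      have hIF : IndepFun (Y i) (Y j) ℙ :=
        (hind i j (Ne.symm hji)).comp (measurable_id.sub measurable_const)
          (measurable_id.sub measurable_const)
      have := hIF.integral_mul_eq_mul_integral (hintY i).aestronglyMeasurable (hintY j).aestronglyMeasurable
      have heq : (fun ω => Y i ω * Y j ω) = (Y i) * (Y j) := rfl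
      rw [heq, this, hmeanY i, hmeanY j, mul_zero]
    · intro h; exact absurd hi h
  rw [Finset.sum_congr rfl hsum, Finset.sum_const, Finset.card_range, nsmul_eq_mul]
  have hmne : ((m:ℝ)) ≠ 0 := by positivity
  field_simp

lemma binom_inv_sum (B : ℕ) (hB : 1 ≤ B) (p g : ℝ) (hg : 0 < g) (hp1 : 1/g ≤ p) (hp2 : p ≤ 1) :
    ∑ j ∈ Finset.range (B+1), (B.choose j : ℝ) * p^j * (1-p)^(B-j) * ((j:ℝ)+1)⁻¹ ≤ g / B := by
  have hp0 : 0 < p := lt_of_lt_of_le (by positivity) hp1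
  have hq0 : 0 ≤ 1 - p := by linarith
  have hterm : ∀ j, (B.choose j : ℝ) * p^j * (1-p)^(B-j) * ((j:ℝ)+1)⁻¹
      = (((B:ℝ)+1) * p)⁻¹ * (p^(j+1) * (1-p)^(B+1-(j+1)) * ((B+1).choose (j+1) : ℝ)) := by
    intro j
    have hnat : ((B+1) * B.choose j : ℕ) = ((B+1).choose (j+1)) * (j+1) := Nat.add_one_mul_choose_eq B j
    have hcast : ((B:ℝ)+1) * (B.choose j : ℝ) = ((B+1).choose (j+1) : ℝ) * ((j:ℝ)+1) := by
      exact_mod_cast congrArg (Nat.cast : ℕ → ℝ) hnat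
    have h1 : ((j:ℝ)+1) ≠ 0 := by positivity
    have h2 : ((B:ℝ)+1) ≠ 0 := by positivity
    have hkey : (B.choose j : ℝ) * ((j:ℝ)+1)⁻¹ = ((B:ℝ)+1)⁻¹ * ((B+1).choose (j+1) : ℝ) := by
      field_simp
      linarith [hcast]
    have h3 : (B+1) - (j+1) = B - j := by omega
    rw [h3, pow_succ, mul_inv]
    calc (B.choose j : ℝ) * p^j * (1-p)^(B-j) * ((j:ℝ)+1)⁻¹
        = ((B.choose j : ℝ) * ((j:ℝ)+1)⁻¹) * (p^j * (1-p)^(B-j)) := by ring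
      _ = (((B:ℝ)+1)⁻¹ * ((B+1).choose (j+1) : ℝ)) * (p^j * (1-p)^(B-j)) := by rw [hkey]
      _ = ((B:ℝ)+1)⁻¹ * p⁻¹ * (p ^ j * p * (1-p)^(B-j) * ((B+1).choose (j+1) : ℝ)) := by
          field_simp
  simp_rw [hterm]
  rw [← Finset.mul_sum]
  have hsum : ∑ j ∈ Finset.range (B+1), p^(j+1) * (1-p)^(B+1-(j+1)) * (((B+1).choose (j+1) : ℕ) : ℝ) ≤ 1 := by
    have hbt := add_pow p (1-p) (B+1)
    rw [show p + (1-p) = 1 by ring, one_pow] at hbt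
    have hsplit := Finset.sum_range_succ' (fun i => p^i * (1-p)^(B+1-i) * (((B+1).choose i : ℕ) : ℝ)) (B+1)
    have hle : ∑ j ∈ Finset.range (B+1), p^(j+1) * (1-p)^(B+1-(j+1)) * (((B+1).choose (j+1) : ℕ) : ℝ)
        ≤ ∑ i ∈ Finset.range (B+2), p^i * (1-p)^(B+1-i) * (((B+1).choose i : ℕ) : ℝ) := by
      rw [hsplit]
      have : 0 ≤ p^0 * (1-p)^(B+1-0) * (((B+1).choose 0 : ℕ) : ℝ) := by positivity
      linarith
    calc _ ≤ _ := hle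
    _ = 1 := by rw [← hbt]
  have hpinv : p⁻¹ ≤ g := by
    rw [inv_le_comm₀ hp0 hg]
    rw [one_div] at hp1; exact hp1
  have hsumnn : 0 ≤ ∑ j ∈ Finset.range (B+1), p^(j+1) * (1-p)^(B+1-(j+1)) * (((B+1).choose (j+1) : ℕ) : ℝ) := by
    apply Finset.sum_nonneg; intro j _; positivity
  have hB0 : (0:ℝ) < B := by exact_mod_cast hB
  calc (((B:ℝ)+1) * p)⁻¹ * ∑ j ∈ Finset.range (B+1), p^(j+1) * (1-p)^(B+1-(j+1)) * (((B+1).choose (j+1) : ℕ) : ℝ)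
      ≤ (((B:ℝ)+1) * p)⁻¹ * 1 := by
        apply mul_le_mul_of_nonneg_left hsum (le_of_lt (by positivity))
    _ = ((B:ℝ)+1)⁻¹ * p⁻¹ := by rw [mul_one, mul_inv]
    _ ≤ ((B:ℝ)+1)⁻¹ * g := by gcongr
    _ ≤ (B:ℝ)⁻¹ * g := by gcongr; linarith
    _ = g / B := by rw [div_eq_mul_inv, mul_comm]

lemma abs_le_sumabs {n : ℕ} (ν : Finset (Fin n) → ℝ) (T : Finset (Fin n)) :
    |ν T| ≤ ∑ U : Finset (Fin n), |ν U| :=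
  Finset.single_le_sum (fun U _ => abs_nonneg (ν U)) (Finset.mem_univ T)

lemma abs_mean_le {n : ℕ} (ν : Finset (Fin n) → ℝ) (W : Finset (Fin n)) (m : ℕ)
    (f : ℕ → Finset (Fin n)) :
    |(m:ℝ)⁻¹ * ∑ j ∈ Finset.range m, ν (f j ∪ W)| ≤ ∑ U : Finset (Fin n), |ν U| := by
  have hCb0 : 0 ≤ ∑ U : Finset (Fin n), |ν U| := Finset.sum_nonneg fun _ _ => abs_nonneg _
  rcases Nat.eq_zero_or_pos m with h | h
  · simp [h, hCb0]
  · have h1 : |∑ j ∈ Finset.range m, ν (f j ∪ W)| ≤ (m:ℝ) * ∑ U : Finset (Fin n), |ν U| := by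
      calc |∑ j ∈ Finset.range m, ν (f j ∪ W)| ≤ ∑ j ∈ Finset.range m, |ν (f j ∪ W)| :=
            Finset.abs_sum_le_sum_abs _ _
        _ ≤ ∑ _j ∈ Finset.range m, ∑ U : Finset (Fin n), |ν U| :=
            Finset.sum_le_sum (fun j _ => abs_le_sumabs ν _)
        _ = (m:ℝ) * ∑ U : Finset (Fin n), |ν U| := by
            rw [Finset.sum_const, Finset.card_range, nsmul_eq_mul]
    rw [abs_mul, abs_inv, Nat.abs_cast]
    have hm0 : (0:ℝ) < m := by exact_mod_cast h
    calc ((m:ℝ))⁻¹ * |∑ j ∈ Finset.range m, ν (f j ∪ W)|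
        ≤ ((m:ℝ))⁻¹ * ((m:ℝ) * ∑ U : Finset (Fin n), |ν U|) := by gcongr
      _ = ∑ U : Finset (Fin n), |ν U| := by field_simp

lemma abs_stratVal_le (n : ℕ) (ν : Finset (Fin n) → ℝ) (K W : Finset (Fin n)) (ℓ : ℕ) :
    |stratVal n ν K W ℓ| ≤ ∑ U : Finset (Fin n), |ν U| := by
  have hCb0 : 0 ≤ ∑ U : Finset (Fin n), |ν U| := Finset.sum_nonneg fun _ _ => abs_nonneg _
  rw [stratVal, abs_mul, abs_inv, Nat.abs_cast]
  rcases Nat.eq_zero_or_pos ((n - K.card).choose ℓ) with h | h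
  · have hs : strata n K ℓ = ∅ := Finset.card_eq_zero.mp (by rw [strata_card]; exact h)
    simp [hs, h, hCb0]
  · have hcard : ((strata n K ℓ).card : ℝ) = ((n - K.card).choose ℓ : ℝ) := by
      exact_mod_cast congrArg (Nat.cast : ℕ → ℝ) (strata_card n K ℓ)
    have h1 : |∑ S ∈ strata n K ℓ, ν (S ∪ W)| ≤ ((n - K.card).choose ℓ : ℝ) * ∑ U : Finset (Fin n), |ν U| := by
      calc |∑ S ∈ strata n K ℓ, ν (S ∪ W)| ≤ ∑ S ∈ strata n K ℓ, |ν (S ∪ W)| :=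
            Finset.abs_sum_le_sum_abs _ _
        _ ≤ ∑ _S ∈ strata n K ℓ, ∑ U : Finset (Fin n), |ν U| :=
            Finset.sum_le_sum (fun T _ => abs_le_sumabs ν _)
        _ = ((strata n K ℓ).card : ℝ) * ∑ U : Finset (Fin n), |ν U| := by
            rw [Finset.sum_const, nsmul_eq_mul]
        _ = _ := by rw [hcard]
    have hpos : (0:ℝ) < ((n - K.card).choose ℓ : ℝ) := by exact_mod_cast h
    calc (((n - K.card).choose ℓ : ℝ))⁻¹ * |∑ S ∈ strata n K ℓ, ν (S ∪ W)|
        ≤ (((n - K.card).choose ℓ : ℝ))⁻¹ * (((n - K.card).choose ℓ : ℝ) * ∑ U : Finset (Fin n), |ν U|) := by gcongr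
      _ = ∑ U : Finset (Fin n), |ν U| := by field_simp

lemma stratVar_nonneg (n : ℕ) (ν : Finset (Fin n) → ℝ) (K W : Finset (Fin n)) (ℓ : ℕ) :
    0 ≤ stratVar n ν K W ℓ :=
  mul_nonneg (inv_nonneg.mpr (Nat.cast_nonneg _))
    (Finset.sum_nonneg fun _ _ => sq_nonneg _)

lemma gam_pos (n k : ℕ) (h2 : 2 ≤ k) (hn : k ≤ n) : 0 < gam n k := by
  rw [gam]
  have hn2 : (2:ℝ) ≤ (n:ℝ) := by exact_mod_cast le_trans h2 hn
  have hkn : (k:ℝ) ≤ (n:ℝ) := by exact_mod_cast hn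
  split_ifs with h
  · nlinarith
  · have hnp : (0:ℝ) < (n:ℝ) := by linarith
    have hx : (0:ℝ) < (n:ℝ) - k + 1 := by linarith
    exact mul_pos (pow_pos hnp _) (pow_pos hx 2)

end AuxLemmas
/-- **Mean squared error bound for the CII estimate (Corollary 4.3).** -/
theorem cii_estimate_mse_bound {Ω : Type*} [MeasureSpace Ω]
    [IsProbabilityMeasure (ℙ : Measure Ω)]
    (n : ℕ) (ν : Finset (Fin n) → ℝ) (K : Finset (Fin n)) (hk : 2 ≤ K.card)
    (lam : ℕ → ℝ)
    (L : ℕ → Finset ℕ) (hL : ∀ w, L w ⊆ Finset.range (n - K.card + 1))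
    (S : Finset (Fin n) → ℕ → ℕ → Ω → Finset (Fin n))
    (M : Finset (Fin n) → ℕ → Ω → ℕ)
    (B : ℕ) (hB : 1 ≤ B) (p : Finset (Fin n) → ℕ → ℝ)
    (hSmeas : ∀ W ℓ m, Measurable (S W ℓ m)) (hMmeas : ∀ W ℓ, Measurable (M W ℓ))
    -- within each estimated stratum the samples are i.i.d. uniform on the stratum
    (hiid : ∀ W, W ⊆ K → ∀ ℓ ∈ L W.card,
      iIndepFun (m := fun _ => finsetMeasurableSpace n) (S W ℓ) ℙ)
    (hunif : ∀ W, W ⊆ K → ∀ ℓ ∈ L W.card, ∀ (m : ℕ) (T : Finset (Fin n)),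
      ℙ {ω | S W ℓ m ω = T}
        = if T ∈ strata n K ℓ then ((strata n K ℓ).card : ℝ≥0∞)⁻¹ else 0)
    -- counts: `M_{W,ℓ} = 1 + Y_{W,ℓ}` with `Y_{W,ℓ} ~ Binomial(B̃, p_{W,ℓ})`,
    -- `p_{W,ℓ} ≥ 1/γ_k`
    (hp : ∀ W, W ⊆ K → ∀ ℓ ∈ L W.card,
      1 / gam n K.card ≤ p W ℓ ∧ p W ℓ ≤ 1)
    (hbin : ∀ W, W ⊆ K → ∀ ℓ ∈ L W.card, ∀ j : ℕ,
      ℙ {ω | M W ℓ ω = j + 1}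
        = ENNReal.ofReal ((B.choose j : ℝ) * p W ℓ ^ j * (1 - p W ℓ) ^ (B - j)))
    -- the sample sequences of distinct estimated strata are mutually independent
    (hseqIndep : iIndepFun
      (m := fun _ : EstIdx n K L => (inferInstance : MeasurableSpace (ℕ → Finset (Fin n))))
      (fun p ω => fun m => S p.1.1 p.1.2 m ω) ℙ)
    -- and independent of the vector of all counts
    (hcountIndep : IndepFun
      (fun ω => fun q : EstIdx n K L => M q.1.1 q.1.2 ω)
      (fun ω => fun (q : EstIdx n K L) (m : ℕ) => S q.1.1 q.1.2 m ω) ℙ) :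
    ∫ ω, (IhatCII n ν K lam L S M ω - CII n ν lam K) ^ 2 ∂ℙ
      ≤ gam n K.card / B * ∑ W ∈ K.powerset, ∑ ℓ ∈ L W.card,
          ((n - K.card).choose ℓ : ℝ) ^ 2 * lam ℓ ^ 2 * stratVar n ν K W ℓ := by
  classical
  have hkn : K.card ≤ n := by
    simpa [Fintype.card_fin] using Finset.card_le_univ K
  have hg : 0 < gam n K.card := gam_pos n K.card hk hkn
  set Cb := ∑ U : Finset (Fin n), |ν U| with hCbdef
  have hCb0 : 0 ≤ Cb := Finset.sum_nonneg fun _ _ => abs_nonneg _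
  set Idx : Finset (Finset (Fin n) × ℕ) :=
    (K.powerset ×ˢ Finset.range (n - K.card + 1)).filter (fun q => q.2 ∈ L q.1.card)
    with hIdxdef
  have hIdxmem : ∀ q : Finset (Fin n) × ℕ, q ∈ Idx ↔ q.1 ⊆ K ∧ q.2 ∈ L q.1.card := by
    intro q
    simp only [hIdxdef, Finset.mem_filter, Finset.mem_product, Finset.mem_powerset,
      Finset.mem_range]
    constructor
    · rintro ⟨⟨h1, _⟩, h2⟩; exact ⟨h1, h2⟩
    · rintro ⟨h1, h2⟩
      exact ⟨⟨h1, Finset.mem_range.mp (hL q.1.card h2)⟩, h2⟩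
  have hconv : ∀ f : Finset (Fin n) → ℕ → ℝ,
      ∑ q ∈ Idx, f q.1 q.2 = ∑ W ∈ K.powerset, ∑ ℓ ∈ L W.card, f W ℓ := by
    intro f
    rw [hIdxdef, Finset.sum_filter, Finset.sum_product]
    refine Finset.sum_congr rfl fun W _ => ?_
    have hsub : ∑ ℓ ∈ Finset.range (n - K.card + 1), (if ℓ ∈ L W.card then f W ℓ else 0)
        = ∑ ℓ ∈ L W.card, (if ℓ ∈ L W.card then f W ℓ else 0) :=
      (Finset.sum_subset (hL W.card) (fun x _ hx => by simp [hx])).symm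
    rw [hsub]
    exact Finset.sum_congr rfl (fun ℓ hℓ => by simp [hℓ])
  set D : Finset (Fin n) × ℕ → Ω → ℝ := fun q ω =>
    ((M q.1 q.2 ω : ℝ))⁻¹ * ∑ m ∈ Finset.range (M q.1 q.2 ω), ν (S q.1 q.2 m ω ∪ q.1)
      - stratVal n ν K q.1 q.2 with hDdef
  set c : Finset (Fin n) × ℕ → ℝ := fun q =>
    ((n - K.card).choose q.2 : ℝ) * lam q.2 * (-1 : ℝ) ^ (K.card - q.1.card) with hcdef
  set Dm : Finset (Fin n) × ℕ → ℕ → Ω → ℝ := fun q m ω =>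
    ((m : ℝ))⁻¹ * ∑ j ∈ Finset.range m, ν (S q.1 q.2 j ω ∪ q.1)
      - stratVal n ν K q.1 q.2 with hDmdef
  -- Step A : pointwise identity
  have stepA : ∀ ω, IhatCII n ν K lam L S M ω - CII n ν lam K = ∑ q ∈ Idx, c q * D q ω := by
    intro ω
    have hrhs : ∑ q ∈ Idx, c q * D q ω
        = ∑ W ∈ K.powerset, ∑ ℓ ∈ L W.card, c (W, ℓ) * D (W, ℓ) ω := by
      rw [← hconv (fun W ℓ => c (W, ℓ) * D (W, ℓ) ω)]
    rw [hrhs, IhatCII, CII_eq, ← Finset.sum_sub_distrib]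
    have h1 : ∀ ℓ ∈ Finset.range (n - K.card + 1),
        (((n - K.card).choose ℓ : ℝ) * lam ℓ *
          ∑ W ∈ K.powerset, (-1 : ℝ) ^ (K.card - W.card) * IhatStrat n ν K L S M W ℓ ω)
        - (((n - K.card).choose ℓ : ℝ) * lam ℓ *
          ∑ W ∈ K.powerset, (-1 : ℝ) ^ (K.card - W.card) * stratVal n ν K W ℓ)
        = ∑ W ∈ K.powerset, (if ℓ ∈ L W.card then c (W, ℓ) * D (W, ℓ) ω else 0) := by
      intro ℓ _
      rw [← mul_sub, ← Finset.sum_sub_distrib, Finset.mul_sum]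
      refine Finset.sum_congr rfl fun W _ => ?_
      rw [← mul_sub, IhatStrat]
      by_cases hWL : ℓ ∈ L W.card
      · simp only [hWL, if_true, hcdef, hDdef]
        ring
      · simp only [hWL, if_false]
        simp
    rw [Finset.sum_congr rfl h1, Finset.sum_comm]
    refine Finset.sum_congr rfl fun W _ => ?_
    have hsub : ∑ ℓ ∈ Finset.range (n - K.card + 1),
          (if ℓ ∈ L W.card then c (W, ℓ) * D (W, ℓ) ω else 0)
        = ∑ ℓ ∈ L W.card, (if ℓ ∈ L W.card then c (W, ℓ) * D (W, ℓ) ω else 0) :=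
      (Finset.sum_subset (hL W.card) (fun x _ hx => by simp [hx])).symm
    rw [hsub]
    exact Finset.sum_congr rfl (fun ℓ hℓ => by simp [hℓ])
  -- measurability and bounds
  have hDmmeas : ∀ q m, Measurable (Dm q m) := by
    intro q m
    apply Measurable.sub _ measurable_const
    apply Measurable.const_mul
    apply Finset.measurable_sum
    intro j _
    exact (measurable_finset_fun (fun T => ν (T ∪ q.1))).comp (hSmeas q.1 q.2 j)
  have hDmbdd : ∀ q m ω, |Dm q m ω| ≤ 2 * Cb := by
    intro q m ω
    simp only [hDmdef]
    calc |((m : ℝ))⁻¹ * ∑ j ∈ Finset.range m, ν (S q.1 q.2 j ω ∪ q.1)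
          - stratVal n ν K q.1 q.2|
        ≤ |((m : ℝ))⁻¹ * ∑ j ∈ Finset.range m, ν (S q.1 q.2 j ω ∪ q.1)|
          + |stratVal n ν K q.1 q.2| := abs_sub _ _
      _ ≤ Cb + Cb := add_le_add (abs_mean_le ν q.1 m _) (abs_stratVal_le n ν K q.1 q.2)
      _ = 2 * Cb := by ring
  have hDmeas : ∀ q, Measurable (D q) := by
    intro q
    have h1 : Measurable fun ω => ((fun m => S q.1 q.2 m ω : ℕ → Finset (Fin n)), M q.1 q.2 ω) :=
      (measurable_pi_lambda _ (fun m => hSmeas q.1 q.2 m)).prodMk (hMmeas q.1 q.2)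
    have h2 : Measurable fun x : (ℕ → Finset (Fin n)) × ℕ =>
        ((x.2 : ℝ))⁻¹ * ∑ m ∈ Finset.range x.2, ν (x.1 m ∪ q.1) := by
      apply measurable_from_prod_countable_left
      intro j
      dsimp only
      apply Measurable.const_mul
      apply Finset.measurable_sum
      intro m _
      exact (measurable_finset_fun (fun T => ν (T ∪ q.1))).comp (measurable_pi_apply m)
    exact (h2.comp h1).sub measurable_const
  have hDbdd : ∀ q ω, |D q ω| ≤ 2 * Cb := by
    intro q ω
    simp only [hDdef]
    calc |((M q.1 q.2 ω : ℝ))⁻¹ * ∑ m ∈ Finset.range (M q.1 q.2 ω), ν (S q.1 q.2 m ω ∪ q.1)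
          - stratVal n ν K q.1 q.2|
        ≤ |((M q.1 q.2 ω : ℝ))⁻¹ * ∑ m ∈ Finset.range (M q.1 q.2 ω), ν (S q.1 q.2 m ω ∪ q.1)|
          + |stratVal n ν K q.1 q.2| := abs_sub _ _
      _ ≤ Cb + Cb := add_le_add (abs_mean_le ν q.1 _ _) (abs_stratVal_le n ν K q.1 q.2)
      _ = 2 * Cb := by ring
  -- expectations of single samples
  have hcomp : ∀ q ∈ Idx, ∀ (j : ℕ) (g : Finset (Fin n) → ℝ),
      ∫ ω, g (S q.1 q.2 j ω ∪ q.1) ∂ℙ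
        = (((n - K.card).choose q.2 : ℝ))⁻¹ * ∑ T ∈ strata n K q.2, g (T ∪ q.1) := by
    intro q hq j g
    obtain ⟨hqK, hqL⟩ := (hIdxmem q).mp hq
    have h0 := integral_comp_finite (S q.1 q.2 j) (hSmeas _ _ _)
      (fun T => g (T ∪ q.1))
    rw [h0]
    have h1 : ∀ T : Finset (Fin n), (ℙ {ω | S q.1 q.2 j ω = T}).toReal * g (T ∪ q.1)
        = if T ∈ strata n K q.2 then ((strata n K q.2).card : ℝ)⁻¹ * g (T ∪ q.1) else 0 := by
      intro T
      rw [hunif q.1 hqK q.2 hqL j T]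
      split_ifs with h
      · simp [ENNReal.toReal_inv]
      · simp
    rw [Finset.sum_congr rfl (fun T _ => h1 T), Finset.sum_ite_mem, Finset.univ_inter,
      ← Finset.mul_sum, strata_card]
  have hXmean : ∀ q ∈ Idx, ∀ j : ℕ,
      ∫ ω, ν (S q.1 q.2 j ω ∪ q.1) ∂ℙ = stratVal n ν K q.1 q.2 := by
    intro q hq j
    rw [hcomp q hq j ν, stratVal]
  have hXvar : ∀ q ∈ Idx, ∀ j : ℕ,
      ∫ ω, (ν (S q.1 q.2 j ω ∪ q.1) - stratVal n ν K q.1 q.2)^2 ∂ℙ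
        = stratVar n ν K q.1 q.2 := by
    intro q hq j
    rw [hcomp q hq j (fun T => (ν T - stratVal n ν K q.1 q.2)^2), stratVar]
  -- mean and second moment of the fixed-count sample means
  have hDmmean : ∀ q ∈ Idx, ∀ m : ℕ, 1 ≤ m → ∫ ω, Dm q m ω ∂ℙ = 0 := by
    intro q hq m hm
    simp only [hDmdef]
    exact sample_mean_integral (fun j ω => ν (S q.1 q.2 j ω ∪ q.1)) _ Cb
      (fun j => (measurable_finset_fun (fun T => ν (T ∪ q.1))).comp (hSmeas q.1 q.2 j))
      (fun j ω => abs_le_sumabs ν _) (fun j => hXmean q hq j) m hm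
  have hDmsq : ∀ q ∈ Idx, ∀ m : ℕ, 1 ≤ m →
      ∫ ω, Dm q m ω * Dm q m ω ∂ℙ = stratVar n ν K q.1 q.2 / m := by
    intro q hq m hm
    obtain ⟨hqK, hqL⟩ := (hIdxmem q).mp hq
    have hsq : ∀ ω, Dm q m ω * Dm q m ω = (Dm q m ω)^2 := fun ω => (sq (Dm q m ω)).symm
    simp only [hsq]
    simp only [hDmdef]
    exact sample_mean_sq (fun j ω => ν (S q.1 q.2 j ω ∪ q.1)) _ _ Cb
      (fun j => (measurable_finset_fun (fun T => ν (T ∪ q.1))).comp (hSmeas q.1 q.2 j))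
      (fun j ω => abs_le_sumabs ν _) (fun j => hXmean q hq j) (fun j => hXvar q hq j)
      (fun i j hij => ((hiid q.1 hqK q.2 hqL).indepFun hij).comp
        (measurable_finset_fun (fun T => ν (T ∪ q.1)))
        (measurable_finset_fun (fun T => ν (T ∪ q.1)))) m hm
  -- factorization via independence of counts and samples
  have hpiM : Measurable (fun ω => (fun r : EstIdx n K L => M r.1.1 r.1.2 ω)) :=
    measurable_pi_lambda _ (fun r => hMmeas r.1.1 r.1.2)
  have hpiS : Measurable (fun ω => (fun (r : EstIdx n K L) (m : ℕ) => S r.1.1 r.1.2 m ω)) :=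
    measurable_pi_lambda _ (fun r => measurable_pi_lambda _ (fun m => hSmeas r.1.1 r.1.2 m))
  have key : ∀ q ∈ Idx, ∀ q' ∈ Idx, ∀ j j' : ℕ,
      ∫ ω, (if M q.1 q.2 ω = j+1 then (1:ℝ) else 0) * (if M q'.1 q'.2 ω = j'+1 then (1:ℝ) else 0)
            * (Dm q (j+1) ω * Dm q' (j'+1) ω) ∂ℙ
        = (∫ ω, (if M q.1 q.2 ω = j+1 then (1:ℝ) else 0)
              * (if M q'.1 q'.2 ω = j'+1 then (1:ℝ) else 0) ∂ℙ)
          * ∫ ω, Dm q (j+1) ω * Dm q' (j'+1) ω ∂ℙ := by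
    intro q hq q' hq' j j'
    set e1 : EstIdx n K L := ⟨q, (hIdxmem q).mp hq⟩ with he1
    set e2 : EstIdx n K L := ⟨q', (hIdxmem q').mp hq'⟩ with he2
    set φ : (EstIdx n K L → ℕ) → ℝ := fun v =>
      (if v e1 = j+1 then (1:ℝ) else 0) * (if v e2 = j'+1 then (1:ℝ) else 0) with hφ
    set ψ : (EstIdx n K L → ℕ → Finset (Fin n)) → ℝ := fun v =>
      ((((j+1 : ℕ) : ℝ))⁻¹ * ∑ i ∈ Finset.range (j+1), ν (v e1 i ∪ q.1)
          - stratVal n ν K q.1 q.2)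
      * ((((j'+1 : ℕ) : ℝ))⁻¹ * ∑ i ∈ Finset.range (j'+1), ν (v e2 i ∪ q'.1)
          - stratVal n ν K q'.1 q'.2) with hψ
    have hm1 : Measurable fun v : EstIdx n K L → ℕ => v e1 := measurable_pi_apply e1
    have hm2 : Measurable fun v : EstIdx n K L → ℕ => v e2 := measurable_pi_apply e2
    have hs1 : MeasurableSet {v : EstIdx n K L → ℕ | v e1 = j+1} := by
      simpa [Set.preimage, Set.mem_singleton_iff] using
        hm1 (measurableSet_singleton (j+1) : MeasurableSet ({j+1} : Set ℕ))
    have hs2 : MeasurableSet {v : EstIdx n K L → ℕ | v e2 = j'+1} := by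
      simpa [Set.preimage, Set.mem_singleton_iff] using
        hm2 (measurableSet_singleton (j'+1) : MeasurableSet ({j'+1} : Set ℕ))
    have hφm : Measurable φ := by
      apply Measurable.mul
      · exact Measurable.ite hs1 measurable_const measurable_const
      · exact Measurable.ite hs2 measurable_const measurable_const
    have hψm : Measurable ψ := by
      apply Measurable.mul
      · apply Measurable.sub _ measurable_const
        apply Measurable.const_mul
        apply Finset.measurable_sum
        intro i _
        exact (measurable_finset_fun (fun T => ν (T ∪ q.1))).comp
          ((measurable_pi_apply i).comp (measurable_pi_apply e1))
      · apply Measurable.sub _ measurable_const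
        apply Measurable.const_mul
        apply Finset.measurable_sum
        intro i _
        exact (measurable_finset_fun (fun T => ν (T ∪ q'.1))).comp
          ((measurable_pi_apply i).comp (measurable_pi_apply e2))
    have hIF := hcountIndep.comp hφm hψm
    have hintφ : Integrable (φ ∘ (fun ω => (fun r : EstIdx n K L => M r.1.1 r.1.2 ω))) ℙ := by
      refine integrable_of_bounded' (hφm.comp hpiM) 1 ?_
      intro ω
      simp only [Function.comp_apply, hφ]
      split_ifs <;> norm_num
    have hintψ : Integrable (ψ ∘ (fun ω => (fun (r : EstIdx n K L) (m : ℕ) => S r.1.1 r.1.2 m ω))) ℙ := by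
      refine integrable_of_bounded' (hψm.comp hpiS) ((2*Cb)*(2*Cb)) ?_
      intro ω
      have h1 : (ψ ∘ (fun ω => (fun (r : EstIdx n K L) (m : ℕ) => S r.1.1 r.1.2 m ω))) ω
          = Dm q (j+1) ω * Dm q' (j'+1) ω := rfl
      rw [h1, abs_mul]
      exact mul_le_mul (hDmbdd q (j+1) ω) (hDmbdd q' (j'+1) ω) (abs_nonneg _)
        (le_trans (abs_nonneg _) (hDmbdd q (j+1) ω))
    have hfact := hIF.integral_mul_eq_mul_integral hintφ.aestronglyMeasurable hintψ.aestronglyMeasurable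
    have hlhs : (fun ω => (if M q.1 q.2 ω = j+1 then (1:ℝ) else 0)
          * (if M q'.1 q'.2 ω = j'+1 then (1:ℝ) else 0) * (Dm q (j+1) ω * Dm q' (j'+1) ω))
        = (φ ∘ (fun ω => (fun r : EstIdx n K L => M r.1.1 r.1.2 ω)))
          * (ψ ∘ (fun ω => (fun (r : EstIdx n K L) (m : ℕ) => S r.1.1 r.1.2 m ω))) := by
      funext ω
      simp only [Function.comp_apply, Pi.mul_apply, hφ, hψ, hDmdef]
      rfl
    rw [hlhs, hfact]
    rfl
  -- distinct strata: product of centered sample means has zero mean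
  have hDmDm0 : ∀ q ∈ Idx, ∀ q' ∈ Idx, q ≠ q' → ∀ j j' : ℕ,
      ∫ ω, Dm q (j+1) ω * Dm q' (j'+1) ω ∂ℙ = 0 := by
    intro q hq q' hq' hne j j'
    set e1 : EstIdx n K L := ⟨q, (hIdxmem q).mp hq⟩ with he1
    set e2 : EstIdx n K L := ⟨q', (hIdxmem q').mp hq'⟩ with he2
    have hee : e1 ≠ e2 := fun h => hne (congrArg Subtype.val h)
    have g1m : Measurable (fun s : ℕ → Finset (Fin n) =>
        (((j+1 : ℕ) : ℝ))⁻¹ * ∑ i ∈ Finset.range (j+1), ν (s i ∪ q.1)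
          - stratVal n ν K q.1 q.2) := by
      apply Measurable.sub _ measurable_const
      apply Measurable.const_mul
      apply Finset.measurable_sum
      intro i _
      exact (measurable_finset_fun (fun T => ν (T ∪ q.1))).comp (measurable_pi_apply i)
    have g2m : Measurable (fun s : ℕ → Finset (Fin n) =>
        (((j'+1 : ℕ) : ℝ))⁻¹ * ∑ i ∈ Finset.range (j'+1), ν (s i ∪ q'.1)
          - stratVal n ν K q'.1 q'.2) := by
      apply Measurable.sub _ measurable_const
      apply Measurable.const_mul
      apply Finset.measurable_sum
      intro i _
      exact (measurable_finset_fun (fun T => ν (T ∪ q'.1))).comp (measurable_pi_apply i)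
    have hIF := (hseqIndep.indepFun hee).comp g1m g2m
    have hint1 : Integrable (Dm q (j+1)) ℙ :=
      integrable_of_bounded' (hDmmeas q (j+1)) (2*Cb) (hDmbdd q (j+1))
    have hint2 : Integrable (Dm q' (j'+1)) ℙ :=
      integrable_of_bounded' (hDmmeas q' (j'+1)) (2*Cb) (hDmbdd q' (j'+1))
    have hIF' : IndepFun (Dm q (j+1)) (Dm q' (j'+1)) ℙ := hIF
    have hfact := hIF'.integral_mul_eq_mul_integral hint1.aestronglyMeasurable hint2.aestronglyMeasurable
    have : (fun ω => Dm q (j+1) ω * Dm q' (j'+1) ω) = Dm q (j+1) * Dm q' (j'+1) := rfl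
    rw [this, hfact, hDmmean q hq (j+1) (Nat.le_add_left 1 j),
      hDmmean q' hq' (j'+1) (Nat.le_add_left 1 j'), mul_zero]
  -- a.e. decomposition of D over the values of the count
  have hae : ∀ q ∈ Idx, D q =ᵐ[ℙ]
      (fun ω => ∑ j ∈ Finset.range (B+1), if M q.1 q.2 ω = j+1 then Dm q (j+1) ω else 0) := by
    intro q hq
    obtain ⟨hqK, hqL⟩ := (hIdxmem q).mp hq
    have hp0 : 0 < p q.1 q.2 := lt_of_lt_of_le (div_pos one_pos hg) (hp q.1 hqK q.2 hqL).1
    have hp1 : p q.1 q.2 ≤ 1 := (hp q.1 hqK q.2 hqL).2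
    set s : ℕ → Set Ω := fun j => {ω | M q.1 q.2 ω = j+1} with hs
    have hsm : ∀ j, MeasurableSet (s j) := fun j =>
      hMmeas q.1 q.2 (measurableSet_singleton (j+1) : MeasurableSet ({j+1} : Set ℕ))
    have hdisj : Set.PairwiseDisjoint ↑(Finset.range (B+1)) s := by
      intro a _ b _ hab
      refine Set.disjoint_left.mpr (fun ω ha hb => hab ?_)
      have h1 : M q.1 q.2 ω = a + 1 := ha
      have h2 : M q.1 q.2 ω = b + 1 := hb
      omega
    have hU : ℙ (⋃ j ∈ Finset.range (B+1), s j) = 1 := by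
      rw [measure_biUnion_finset hdisj (fun j _ => hsm j)]
      have hb1 : ∀ j ∈ Finset.range (B+1), ℙ (s j)
          = ENNReal.ofReal ((B.choose j : ℝ) * p q.1 q.2 ^ j * (1 - p q.1 q.2)^(B-j)) :=
        fun j _ => hbin q.1 hqK q.2 hqL j
      have hq0 : 0 ≤ 1 - p q.1 q.2 := by linarith
      rw [Finset.sum_congr rfl hb1,
        ← ENNReal.ofReal_sum_of_nonneg (fun j _ => by positivity)]
      have hbt := add_pow (p q.1 q.2) (1 - p q.1 q.2) B
      rw [show p q.1 q.2 + (1 - p q.1 q.2) = 1 by ring, one_pow] at hbt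
      have hcongr : ∑ j ∈ Finset.range (B+1),
            (B.choose j : ℝ) * p q.1 q.2 ^ j * (1 - p q.1 q.2)^(B-j)
          = ∑ j ∈ Finset.range (B+1),
            p q.1 q.2 ^ j * (1 - p q.1 q.2)^(B-j) * (B.choose j : ℝ) :=
        Finset.sum_congr rfl (fun j _ => by ring)
      rw [hcongr, ← hbt, ENNReal.ofReal_one]
    have hUm : MeasurableSet (⋃ j ∈ Finset.range (B+1), s j) :=
      (Finset.range (B+1)).measurableSet_biUnion (fun j _ => hsm j)
    have hcompl : ℙ ((⋃ j ∈ Finset.range (B+1), s j)ᶜ) = 0 := by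
      rw [measure_compl hUm (measure_ne_top _ _), hU, measure_univ, tsub_self]
    refine Filter.eventually_of_mem (MeasureTheory.mem_ae_iff.mpr hcompl) ?_
    intro ω hω
    obtain ⟨j, hj, hωj⟩ := Set.mem_iUnion₂.mp hω
    have hM : M q.1 q.2 ω = j + 1 := hωj
    have hjB : j < B + 1 := Finset.mem_range.mp hj
    simp only [hDdef, hM]
    rw [sum_ite_succ_eq B (j+1) (fun j' => Dm q (j'+1) ω)]
    rw [if_pos (by omega : 1 ≤ j+1 ∧ j+1 ≤ B+1)]
    simp only [Nat.add_sub_cancel, hDmdef]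
  -- basic facts about the indicator pieces
  have hpiece_meas : ∀ (q : Finset (Fin n) × ℕ) (j : ℕ),
      Measurable (fun ω => if M q.1 q.2 ω = j+1 then Dm q (j+1) ω else 0) := fun q j =>
    Measurable.ite (hMmeas q.1 q.2 (measurableSet_singleton (j+1) : MeasurableSet ({j+1} : Set ℕ)))
      (hDmmeas q (j+1)) measurable_const
  have hpiece_bdd : ∀ (q : Finset (Fin n) × ℕ) (j : ℕ) (ω : Ω),
      |if M q.1 q.2 ω = j+1 then Dm q (j+1) ω else 0| ≤ 2*Cb := by
    intro q j ω
    split_ifs with h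
    · exact hDmbdd q (j+1) ω
    · simpa using by linarith
  have hpiece_int : ∀ (q q' : Finset (Fin n) × ℕ) (j j' : ℕ),
      Integrable (fun ω => (if M q.1 q.2 ω = j+1 then Dm q (j+1) ω else 0)
        * (if M q'.1 q'.2 ω = j'+1 then Dm q' (j'+1) ω else 0)) ℙ := by
    intro q q' j j'
    refine integrable_of_bounded' ((hpiece_meas q j).mul (hpiece_meas q' j')) ((2*Cb)*(2*Cb)) ?_
    intro ω
    rw [abs_mul]
    exact mul_le_mul (hpiece_bdd q j ω) (hpiece_bdd q' j' ω) (abs_nonneg _)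
      (le_trans (abs_nonneg _) (hpiece_bdd q j ω))
  -- cross terms vanish
  have hDD0 : ∀ q ∈ Idx, ∀ q' ∈ Idx, q ≠ q' → ∫ ω, D q ω * D q' ω ∂ℙ = 0 := by
    intro q hq q' hq' hne
    have hae2 : (fun ω => D q ω * D q' ω) =ᵐ[ℙ] (fun ω =>
        ∑ j ∈ Finset.range (B+1), ∑ j' ∈ Finset.range (B+1),
          (if M q.1 q.2 ω = j+1 then Dm q (j+1) ω else 0)
            * (if M q'.1 q'.2 ω = j'+1 then Dm q' (j'+1) ω else 0)) := by
      filter_upwards [hae q hq, hae q' hq'] with ω h1 h2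
      rw [h1, h2, Finset.sum_mul_sum]
    rw [integral_congr_ae hae2]
    rw [integral_finset_sum _ (fun j _ => integrable_finset_sum _ (fun j' _ => hpiece_int q q' j j'))]
    refine Finset.sum_eq_zero (fun j _ => ?_)
    rw [integral_finset_sum _ (fun j' _ => hpiece_int q q' j j')]
    refine Finset.sum_eq_zero (fun j' _ => ?_)
    have hpt : ∀ ω, (if M q.1 q.2 ω = j+1 then Dm q (j+1) ω else 0)
          * (if M q'.1 q'.2 ω = j'+1 then Dm q' (j'+1) ω else 0)
        = (if M q.1 q.2 ω = j+1 then (1:ℝ) else 0)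
          * (if M q'.1 q'.2 ω = j'+1 then (1:ℝ) else 0) * (Dm q (j+1) ω * Dm q' (j'+1) ω) := by
      intro ω; split_ifs <;> ring
    simp_rw [hpt]
    rw [key q hq q' hq' j j', hDmDm0 q hq q' hq' hne j j', mul_zero]
  -- diagonal bound
  have hDsq : ∀ q ∈ Idx, ∫ ω, D q ω * D q ω ∂ℙ
      ≤ gam n K.card / B * stratVar n ν K q.1 q.2 := by
    intro q hq
    obtain ⟨hqK, hqL⟩ := (hIdxmem q).mp hq
    have hp0 : 0 < p q.1 q.2 := lt_of_lt_of_le (div_pos one_pos hg) (hp q.1 hqK q.2 hqL).1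
    have hp1 : p q.1 q.2 ≤ 1 := (hp q.1 hqK q.2 hqL).2
    have hq0 : 0 ≤ 1 - p q.1 q.2 := by linarith
    have hae2 : (fun ω => D q ω * D q ω) =ᵐ[ℙ] (fun ω =>
        ∑ j ∈ Finset.range (B+1), ∑ j' ∈ Finset.range (B+1),
          (if M q.1 q.2 ω = j+1 then Dm q (j+1) ω else 0)
            * (if M q.1 q.2 ω = j'+1 then Dm q (j'+1) ω else 0)) := by
      filter_upwards [hae q hq] with ω h1
      rw [h1, Finset.sum_mul_sum]
    rw [integral_congr_ae hae2]
    rw [integral_finset_sum _ (fun j _ => integrable_finset_sum _ (fun j' _ => hpiece_int q q j j'))]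
    have hinner : ∀ j ∈ Finset.range (B+1),
        ∫ ω, ∑ j' ∈ Finset.range (B+1), (if M q.1 q.2 ω = j+1 then Dm q (j+1) ω else 0)
            * (if M q.1 q.2 ω = j'+1 then Dm q (j'+1) ω else 0) ∂ℙ
          = ((B.choose j : ℝ) * p q.1 q.2 ^ j * (1 - p q.1 q.2)^(B-j))
            * (stratVar n ν K q.1 q.2 / (j+1)) := by
      intro j hj
      rw [integral_finset_sum _ (fun j' _ => hpiece_int q q j j')]
      rw [Finset.sum_eq_single_of_mem j hj]
      · -- the diagonal term
        have hpt : ∀ ω, (if M q.1 q.2 ω = j+1 then Dm q (j+1) ω else 0)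
              * (if M q.1 q.2 ω = j+1 then Dm q (j+1) ω else 0)
            = (if M q.1 q.2 ω = j+1 then (1:ℝ) else 0)
              * (if M q.1 q.2 ω = j+1 then (1:ℝ) else 0) * (Dm q (j+1) ω * Dm q (j+1) ω) := by
          intro ω; split_ifs <;> ring
        simp_rw [hpt]
        rw [key q hq q hq j j]
        have hind : ∫ ω, (if M q.1 q.2 ω = j+1 then (1:ℝ) else 0)
            * (if M q.1 q.2 ω = j+1 then (1:ℝ) else 0) ∂ℙ
            = (ℙ {ω | M q.1 q.2 ω = j+1}).toReal := by
          have hpt2 : ∀ ω, (if M q.1 q.2 ω = j+1 then (1:ℝ) else 0)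
              * (if M q.1 q.2 ω = j+1 then (1:ℝ) else 0)
              = (if M q.1 q.2 ω = j+1 then (1:ℝ) else 0) := by
            intro ω; split_ifs <;> ring
          simp_rw [hpt2]
          exact integral_ite_eq_toReal
            (hMmeas q.1 q.2 (measurableSet_singleton (j+1) : MeasurableSet ({j+1} : Set ℕ)))
        rw [hind, hDmsq q hq (j+1) (Nat.le_add_left 1 j),
          hbin q.1 hqK q.2 hqL j,
          ENNReal.toReal_ofReal (by positivity)]
        push_cast
        ring
      · -- off-diagonal terms vanish pointwise
        intro j' _ hj'
        have hpt : ∀ ω, (if M q.1 q.2 ω = j+1 then Dm q (j+1) ω else 0)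
              * (if M q.1 q.2 ω = j'+1 then Dm q (j'+1) ω else 0) = 0 := by
          intro ω
          split_ifs <;> first | omega | ring
        simp_rw [hpt]
        exact integral_zero Ω ℝ
    rw [Finset.sum_congr rfl hinner]
    have hstep : ∑ j ∈ Finset.range (B+1),
        ((B.choose j : ℝ) * p q.1 q.2 ^ j * (1 - p q.1 q.2)^(B-j))
          * (stratVar n ν K q.1 q.2 / (j+1))
        = stratVar n ν K q.1 q.2 * ∑ j ∈ Finset.range (B+1),
            (B.choose j : ℝ) * p q.1 q.2 ^ j * (1 - p q.1 q.2)^(B-j) * ((j:ℝ)+1)⁻¹ := by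
      rw [Finset.mul_sum]
      refine Finset.sum_congr rfl (fun j _ => ?_)
      have : ((j:ℝ)+1) ≠ 0 := by positivity
      push_cast
      field_simp
    rw [hstep]
    calc stratVar n ν K q.1 q.2 * ∑ j ∈ Finset.range (B+1),
          (B.choose j : ℝ) * p q.1 q.2 ^ j * (1 - p q.1 q.2)^(B-j) * ((j:ℝ)+1)⁻¹
        ≤ stratVar n ν K q.1 q.2 * (gam n K.card / B) :=
          mul_le_mul_of_nonneg_left
            (binom_inv_sum B hB (p q.1 q.2) (gam n K.card) hg (hp q.1 hqK q.2 hqL).1 hp1)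
            (stratVar_nonneg n ν K q.1 q.2)
      _ = gam n K.card / B * stratVar n ν K q.1 q.2 := by ring
  -- integrability of products of D's
  have hDDint : ∀ q q' : Finset (Fin n) × ℕ, Integrable (fun ω => D q ω * D q' ω) ℙ := by
    intro q q'
    refine integrable_of_bounded' ((hDmeas q).mul (hDmeas q')) ((2*Cb)*(2*Cb)) ?_
    intro ω
    rw [abs_mul]
    exact mul_le_mul (hDbdd q ω) (hDbdd q' ω) (abs_nonneg _)
      (le_trans (abs_nonneg _) (hDbdd q ω))
  -- main expansion
  have hmain : ∫ ω, (IhatCII n ν K lam L S M ω - CII n ν lam K)^2 ∂ℙ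
      = ∑ q ∈ Idx, ∑ q' ∈ Idx, (c q * c q') * ∫ ω, D q ω * D q' ω ∂ℙ := by
    have h1 : ∀ ω, (IhatCII n ν K lam L S M ω - CII n ν lam K)^2
        = ∑ q ∈ Idx, ∑ q' ∈ Idx, (c q * c q') * (D q ω * D q' ω) := by
      intro ω
      rw [stepA ω, sq, Finset.sum_mul_sum]
      exact Finset.sum_congr rfl fun q _ => Finset.sum_congr rfl fun q' _ => by ring
    simp_rw [h1]
    rw [integral_finset_sum _ (fun q _ => integrable_finset_sum _
      (fun q' _ => (hDDint q q').const_mul (c q * c q')))]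
    refine Finset.sum_congr rfl fun q _ => ?_
    rw [integral_finset_sum _ (fun q' _ => (hDDint q q').const_mul (c q * c q'))]
    refine Finset.sum_congr rfl fun q' _ => ?_
    rw [integral_const_mul]
  have hdiagred : ∑ q ∈ Idx, ∑ q' ∈ Idx, (c q * c q') * ∫ ω, D q ω * D q' ω ∂ℙ
      = ∑ q ∈ Idx, (c q)^2 * ∫ ω, D q ω * D q ω ∂ℙ := by
    refine Finset.sum_congr rfl fun q hq => ?_
    rw [Finset.sum_eq_single_of_mem q hq]
    · ring
    · intro q' hq' hne
      rw [hDD0 q hq q' hq' (fun h => hne h.symm), mul_zero]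
  have hc2 : ∀ q : Finset (Fin n) × ℕ, (c q)^2 * stratVar n ν K q.1 q.2
      = ((n - K.card).choose q.2 : ℝ)^2 * lam q.2^2 * stratVar n ν K q.1 q.2 := by
    intro q
    simp only [hcdef]
    have hs2 : ((-1:ℝ)^(K.card - q.1.card))^2 = 1 := by
      rw [← pow_mul, mul_comm, pow_mul, neg_one_sq, one_pow]
    rw [mul_pow, mul_pow, hs2, mul_one]
  calc ∫ ω, (IhatCII n ν K lam L S M ω - CII n ν lam K)^2 ∂ℙ
      = ∑ q ∈ Idx, (c q)^2 * ∫ ω, D q ω * D q ω ∂ℙ := by rw [hmain, hdiagred]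
    _ ≤ ∑ q ∈ Idx, (c q)^2 * (gam n K.card / B * stratVar n ν K q.1 q.2) :=
        Finset.sum_le_sum (fun q hq => mul_le_mul_of_nonneg_left (hDsq q hq) (sq_nonneg _))
    _ = gam n K.card / B * ∑ q ∈ Idx,
          ((n - K.card).choose q.2 : ℝ)^2 * lam q.2^2 * stratVar n ν K q.1 q.2 := by
        rw [Finset.mul_sum]
        refine Finset.sum_congr rfl (fun q _ => ?_)
        rw [← hc2 q]
        ring
    _ = gam n K.card / B * ∑ W ∈ K.powerset, ∑ ℓ ∈ L W.card,
          ((n - K.card).choose ℓ : ℝ)^2 * lam ℓ^2 * stratVar n ν K W ℓ := by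
        rw [hconv (fun W ℓ => ((n - K.card).choose ℓ : ℝ)^2 * lam ℓ^2 * stratVar n ν K W ℓ)]
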